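/- Let X be an m×m bistochastic matrix and let n be a positive integer. Then there exists an m×m matrix P with nonnegative integer entries such that every row of P and every column of P sums to n, and |n·x_{i,j} − p_{i,j}| < 1 for all i, j ∈ {1,…,m}. -/

import Mathlib

open Finset Function

/-- A matrix is bistochastic (a frequency matrix) if its entries are
nonnegative and every row and every column sums to 1. -/
def Bistochastic {m : ℕ} (X : Matrix (Fin m) (Fin m) ℝ) : Prop :=
  (∀ i j, 0 ≤ X i j) ∧ (∀ i, ∑ j, X i j = 1) ∧ (∀ j, ∑ i, X i j = 1)

lemma zmod_val_add_one {k : ℕ} [NeZero k] (hk : 2 ≤ k) (t : ZMod k) :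
    (t+1).val = if t.val = k-1 then 0 else t.val + 1 := by
  haveI : Fact (1 < k) := ⟨hk⟩
  rw [ZMod.val_add, ZMod.val_one]
  have := ZMod.val_lt t
  rcases eq_or_ne t.val (k-1) with h | h
  · rw [if_pos h, h, show k-1+1 = k by omega, Nat.mod_self]
  · rw [if_neg h, Nat.mod_eq_of_lt (by omega)]

lemma zmod_val_sub_one {k : ℕ} [NeZero k] (hk : 2 ≤ k) (t : ZMod k) :
    (t-1).val = if t.val = 0 then k-1 else t.val - 1 := by
  have h := zmod_val_add_one hk (t-1)
  rw [sub_add_cancel] at h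
  have h1 := ZMod.val_lt (t-1)
  have h2 := ZMod.val_lt t
  split at h <;> split <;> omega

def walkAux {α : Type*} (f g : α → α) (a : α) : ℕ → α
  | 0 => a
  | (k+1) => if Even k then f (walkAux f g a k) else g (walkAux f g a k)

theorem exists_cycle {m : ℕ} (F : Finset (Fin m × Fin m)) (hne : F.Nonempty)
    (hrow : ∀ p ∈ F, ∃ q ∈ F, q.1 = p.1 ∧ q.2 ≠ p.2)
    (hcol : ∀ p ∈ F, ∃ q ∈ F, q.2 = p.2 ∧ q.1 ≠ p.1) :
    ∃ k : ℕ, 2 ≤ k ∧ ∃ r c : ZMod k → Fin m,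
      Injective r ∧ Injective c ∧
      ∀ t, (r t, c t) ∈ F ∧ (r t, c (t + 1)) ∈ F := by
  classical
  have hrow' : ∀ p : {q // q ∈ F}, ∃ q : {q // q ∈ F}, q.1.1 = p.1.1 ∧ q.1.2 ≠ p.1.2 := by
    rintro ⟨p, hp⟩
    obtain ⟨q, hq, h1, h2⟩ := hrow p hp
    exact ⟨⟨q, hq⟩, h1, h2⟩
  have hcol' : ∀ p : {q // q ∈ F}, ∃ q : {q // q ∈ F}, q.1.2 = p.1.2 ∧ q.1.1 ≠ p.1.1 := by
    rintro ⟨p, hp⟩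
    obtain ⟨q, hq, h1, h2⟩ := hcol p hp
    exact ⟨⟨q, hq⟩, h1, h2⟩
  choose f hf1 hf2 using hrow'
  choose g hg1 hg2 using hcol'
  obtain ⟨e0, he0⟩ := hne
  set w : ℕ → {q // q ∈ F} := walkAux f g ⟨e0, he0⟩ with hw
  have hstep : ∀ a, w (a+1) = if Even a then f (w a) else g (w a) := fun a => rfl
  set I : ℕ → Fin m := fun u => (w (2*u)).1.1 with hI
  set J : ℕ → Fin m := fun u => (w (2*u)).1.2 with hJ
  have hodd : ∀ u, w (2*u+1) = f (w (2*u)) := by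
    intro u
    rw [hstep (2*u), if_pos (even_two_mul u)]
  have heven : ∀ u, w (2*u+2) = g (w (2*u+1)) := by
    intro u
    have hpar : ¬ Even (2*u+1) := by
      intro h
      exact (Nat.even_add_one.mp h) (even_two_mul u)
    have := hstep (2*u+1)
    rw [if_neg hpar] at this
    exact this
  have hF1a : ∀ u, (w (2*u+1)).1.1 = I u := fun u => by rw [hodd u]; exact hf1 _
  have hF1b : ∀ u, (w (2*u+1)).1.2 ≠ J u := fun u => by rw [hodd u]; exact hf2 _
  have hF2a : ∀ u, J (u+1) = (w (2*u+1)).1.2 := by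
    intro u
    have h2 : 2*(u+1) = 2*u+2 := by ring
    rw [hJ]
    simp only
    rw [h2, heven u]
    exact hg1 _
  have hF2b : ∀ u, I (u+1) ≠ (w (2*u+1)).1.1 := by
    intro u
    have h2 : 2*(u+1) = 2*u+2 := by ring
    rw [hI]
    simp only
    rw [h2, heven u]
    exact hg2 _
  have hmemw : ∀ a, ((w a).1.1, (w a).1.2) ∈ F := fun a => by
    rw [Prod.mk.eta]; exact (w a).2
  set v : ℕ → (Fin m) ⊕ (Fin m) :=
    fun a => if Even a then Sum.inl (w a).1.1 else Sum.inr (w a).1.2 with hv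
  have hveven : ∀ u, v (2*u) = Sum.inl (I u) := fun u => by
    rw [hv]; simp only [if_pos (even_two_mul u)]; rfl
  have hvodd : ∀ u, v (2*u+1) = Sum.inr (J (u+1)) := by
    intro u
    have hpar : ¬ Even (2*u+1) := fun h => (Nat.even_add_one.mp h) (even_two_mul u)
    rw [hv]
    simp only [if_neg hpar]
    rw [hF2a u]
  -- pigeonhole
  have hex : ∃ b, ∃ a, a < b ∧ v a = v b := by
    have hcard : (Finset.univ : Finset ((Fin m) ⊕ (Fin m))).card
        < (Finset.range (2*m+1)).card := by
      rw [Finset.card_range, Finset.card_univ, Fintype.card_sum, Fintype.card_fin]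
      omega
    obtain ⟨a, _, b, _, hab, heq⟩ :=
      Finset.exists_ne_map_eq_of_card_lt_of_maps_to hcard
        (fun a _ => Finset.mem_univ (v a))
    rcases lt_or_gt_of_ne hab with h | h
    · exact ⟨b, a, h, heq⟩
    · exact ⟨a, b, h, heq.symm⟩
  set T := Nat.find hex with hT
  obtain ⟨s, hsT, hvs⟩ := Nat.find_spec hex
  rw [← hT] at hsT hvs
  have hvinj : ∀ a b, a < T → b < T → v a = v b → a = b := by
    intro a b ha hb h
    rcases lt_trichotomy a b with hab | hab | hab
    · exact absurd ⟨a, hab, h⟩ (Nat.find_min hex hb)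
    · exact hab
    · exact absurd ⟨b, hab, h.symm⟩ (Nat.find_min hex ha)
  -- parity agreement
  have hvpar : ∀ a b, v a = v b → (Even a ↔ Even b) := by
    intro a b h
    by_cases ha : Even a <;> by_cases hb : Even b
    · exact iff_of_true ha hb
    · obtain ⟨u, hu⟩ := ha
      obtain ⟨u', hu'⟩ := Nat.not_even_iff_odd.mp hb
      rw [show a = 2*u by omega, show b = 2*u'+1 by omega, hveven, hvodd] at h
      simp at h
    · obtain ⟨u, hu⟩ := Nat.not_even_iff_odd.mp ha
      obtain ⟨u', hu'⟩ := hb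
      rw [show a = 2*u+1 by omega, show b = 2*u' by omega, hvodd, hveven] at h
      simp at h
    · exact iff_of_false ha hb
  have hparst : Even s ↔ Even T := hvpar s T hvs
  by_cases hpar : Even s
  · -- case A : shared vertex is a row
    have hparT := hparst.mp hpar
    obtain ⟨σ, hσ⟩ := hpar
    obtain ⟨τ, hτ⟩ := hparT
    have hs2 : s = 2*σ := by omega
    have hT2 : T = 2*τ := by omega
    have hστ : σ < τ := by omega
    have hIστ : I σ = I τ := by
      rw [hs2, hT2, hveven, hveven] at hvs
      exact Sum.inl.inj hvs
    set k := τ - σ with hkdef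
    haveI : NeZero k := ⟨by omega⟩
    have hk2 : 2 ≤ k := by
      by_contra h
      have hτσ : τ = σ + 1 := by omega
      apply hF2b σ
      rw [show σ+1 = τ from hτσ.symm, ← hIστ]
      exact (hF1a σ).symm
    set r : ZMod k → Fin m := fun t => I (σ + t.val) with hr
    set c : ZMod k → Fin m := fun t => J (σ + t.val + 1) with hc2
    have hmem1 : ∀ t : ZMod k, (r t, c t) ∈ F := by
      intro t
      simp only [hr, hc2]
      rw [← hF1a (σ + t.val), hF2a (σ + t.val)]
      exact hmemw _
    have hmem2 : ∀ t : ZMod k, (r t, c (t - 1)) ∈ F := by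
      intro t
      rcases eq_or_ne t.val 0 with h0 | h0
      · have hval : (t-1).val = k-1 := by rw [zmod_val_sub_one hk2 t, if_pos h0]
        have ht0 : t = 0 := (ZMod.val_eq_zero t).mp h0
        simp only [hr, hc2]
        rw [hval, ht0, ZMod.val_zero, Nat.add_zero,
          show σ + (k-1) + 1 = τ by omega, hIστ]
        exact hmemw (2*τ)
      · have hval : (t-1).val = t.val - 1 := by rw [zmod_val_sub_one hk2 t, if_neg h0]
        simp only [hr, hc2]
        rw [hval, show σ + (t.val - 1) + 1 = σ + t.val by omega]
        exact hmemw (2*(σ + t.val))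
    have hrinj : Injective r := by
      intro a b hab
      simp only [hr] at hab
      have hva : v (2*(σ + a.val)) = v (2*(σ + b.val)) := by
        rw [hveven, hveven, hab]
      have hka := ZMod.val_lt a
      have hkb := ZMod.val_lt b
      have hlt1 : 2*(σ + a.val) < T := by omega
      have hlt2 : 2*(σ + b.val) < T := by omega
      have heq := hvinj _ _ hlt1 hlt2 hva
      exact ZMod.val_injective k (by omega)
    have hcinj : Injective c := by
      intro a b hab
      simp only [hc2] at hab
      have hva : v (2*(σ + a.val)+1) = v (2*(σ + b.val)+1) := by
        rw [hvodd, hvodd, hab]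
      have hka := ZMod.val_lt a
      have hkb := ZMod.val_lt b
      have hlt1 : 2*(σ + a.val)+1 < T := by omega
      have hlt2 : 2*(σ + b.val)+1 < T := by omega
      have heq := hvinj _ _ hlt1 hlt2 hva
      exact ZMod.val_injective k (by omega)
    refine ⟨k, hk2, fun t => r (-t), fun t => c (-t),
      fun a b h => neg_injective (hrinj h),
      fun a b h => neg_injective (hcinj h),
      fun t => ⟨hmem1 (-t), ?_⟩⟩
    show (r (-t), c (-(t+1))) ∈ F
    have e : -(t+1) = (-t) - 1 := by ring
    rw [e]
    exact hmem2 (-t)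
  · -- case B : shared vertex is a column
    have hparT : ¬ Even T := fun h => hpar (hparst.mpr h)
    obtain ⟨σ, hσ⟩ := Nat.not_even_iff_odd.mp hpar
    obtain ⟨τ, hτ⟩ := Nat.not_even_iff_odd.mp hparT
    have hs2 : s = 2*σ+1 := by omega
    have hT2 : T = 2*τ+1 := by omega
    have hστ : σ < τ := by omega
    have hJστ : J (σ+1) = J (τ+1) := by
      rw [hs2, hT2, hvodd, hvodd] at hvs
      exact Sum.inr.inj hvs
    set k := τ - σ with hkdef
    haveI : NeZero k := ⟨by omega⟩
    have hk2 : 2 ≤ k := by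
      by_contra h
      apply hF1b (σ+1)
      rw [← hF2a (σ+1), show σ+1+1 = τ+1 by omega, ← hJστ]
    set r : ZMod k → Fin m := fun t => I (σ + 1 + t.val) with hr
    set c : ZMod k → Fin m := fun t => J (σ + t.val + 1) with hc2
    have hmem1 : ∀ t : ZMod k, (r t, c t) ∈ F := by
      intro t
      simp only [hr, hc2]
      rw [show σ + t.val + 1 = σ + 1 + t.val by omega]
      exact hmemw (2*(σ + 1 + t.val))
    have hmem2 : ∀ t : ZMod k, (r t, c (t + 1)) ∈ F := by
      intro t
      rcases eq_or_ne t.val (k-1) with h0 | h0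
      · have hval : (t+1).val = 0 := by rw [zmod_val_add_one hk2 t, if_pos h0]
        simp only [hr, hc2]
        rw [hval, h0, Nat.add_zero, show σ + 1 + (k-1) = τ by omega,
          hJστ, ← hF1a τ, hF2a τ]
        exact hmemw (2*τ+1)
      · have hval : (t+1).val = t.val + 1 := by rw [zmod_val_add_one hk2 t, if_neg h0]
        simp only [hr, hc2]
        rw [hval, show σ + (t.val + 1) + 1 = (σ + 1 + t.val) + 1 by omega,
          ← hF1a (σ + 1 + t.val), hF2a (σ + 1 + t.val)]
        exact hmemw (2*(σ + 1 + t.val)+1)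
    have hrinj : Injective r := by
      intro a b hab
      simp only [hr] at hab
      have hva : v (2*(σ + 1 + a.val)) = v (2*(σ + 1 + b.val)) := by
        rw [hveven, hveven, hab]
      have hka := ZMod.val_lt a
      have hkb := ZMod.val_lt b
      have hlt1 : 2*(σ + 1 + a.val) < T := by omega
      have hlt2 : 2*(σ + 1 + b.val) < T := by omega
      have heq := hvinj _ _ hlt1 hlt2 hva
      exact ZMod.val_injective k (by omega)
    have hcinj : Injective c := by
      intro a b hab
      simp only [hc2] at hab
      have hva : v (2*(σ + a.val)+1) = v (2*(σ + b.val)+1) := by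
        rw [hvodd, hvodd, hab]
      have hka := ZMod.val_lt a
      have hkb := ZMod.val_lt b
      have hlt1 : 2*(σ + a.val)+1 < T := by omega
      have hlt2 : 2*(σ + b.val)+1 < T := by omega
      have heq := hvinj _ _ hlt1 hlt2 hva
      exact ZMod.val_injective k (by omega)
    exact ⟨k, hk2, r, c, hrinj, hcinj, fun t => ⟨hmem1 t, hmem2 t⟩⟩

section CycMat

variable {m k : ℕ} [NeZero k]

noncomputable def cycMat (r c : ZMod k → Fin m) : Matrix (Fin m) (Fin m) ℝ :=
  fun i j => ∑ t : ZMod k,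
    ((if r t = i ∧ c t = j then (1:ℝ) else 0) - (if r t = i ∧ c (t+1) = j then (1:ℝ) else 0))

lemma cycMat_row (r c : ZMod k → Fin m) (i : Fin m) : ∑ j, cycMat r c i j = 0 := by
  unfold cycMat
  rw [Finset.sum_comm]
  refine Finset.sum_eq_zero fun t _ => ?_
  rw [Finset.sum_sub_distrib]
  simp [ite_and]

lemma cycMat_col (r c : ZMod k → Fin m) (j : Fin m) : ∑ i, cycMat r c i j = 0 := by
  unfold cycMat
  rw [Finset.sum_comm]
  have h : ∀ t : ZMod k, ∑ i, ((if r t = i ∧ c t = j then (1:ℝ) else 0)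
      - (if r t = i ∧ c (t+1) = j then (1:ℝ) else 0))
      = (if c t = j then (1:ℝ) else 0) - (if c (t+1) = j then (1:ℝ) else 0) := by
    intro t
    rw [Finset.sum_sub_distrib]
    simp [ite_and]
  rw [Finset.sum_congr rfl fun t _ => h t, Finset.sum_sub_distrib]
  rw [Fintype.sum_equiv (Equiv.addRight (1 : ZMod k))
    (fun t => if c (t+1) = j then (1:ℝ) else 0) (fun t => if c t = j then (1:ℝ) else 0)
    (fun t => rfl)]
  exact sub_self _

variable [Fact (1 < k)]

lemma cycMat_plus {r c : ZMod k → Fin m} (hr : Injective r) (hc : Injective c) (t : ZMod k) :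
    cycMat r c (r t) (c t) = 1 := by
  unfold cycMat
  have h : ∀ s : ZMod k, ((if r s = r t ∧ c s = c t then (1:ℝ) else 0)
      - (if r s = r t ∧ c (s+1) = c t then (1:ℝ) else 0)) = if s = t then 1 else 0 := by
    intro s
    rcases eq_or_ne s t with rfl | hst
    · have hne : c (s+1) ≠ c s := fun h => by
        exact one_ne_zero (add_eq_left.mp (hc h))
      simp [hne]
    · have hne : r s ≠ r t := fun h => hst (hr h)
      simp [hne, hst]
  rw [Finset.sum_congr rfl fun s _ => h s]
  simp

lemma cycMat_minus {r c : ZMod k → Fin m} (hr : Injective r) (hc : Injective c) (t : ZMod k) :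
    cycMat r c (r t) (c (t+1)) = -1 := by
  unfold cycMat
  have h : ∀ s : ZMod k, ((if r s = r t ∧ c s = c (t+1) then (1:ℝ) else 0)
      - (if r s = r t ∧ c (s+1) = c (t+1) then (1:ℝ) else 0)) = if s = t then -1 else 0 := by
    intro s
    rcases eq_or_ne s t with rfl | hst
    · have hne : c s ≠ c (s+1) := fun h => by
        exact one_ne_zero (add_eq_left.mp (hc h).symm)
      simp [hne]
    · have hne : r s ≠ r t := fun h => hst (hr h)
      simp [hne, hst]
  rw [Finset.sum_congr rfl fun s _ => h s]
  simp

omit [Fact (1 < k)] in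
lemma cycMat_zero {r c : ZMod k → Fin m} {i j : Fin m}
    (h1 : ¬ ∃ t, r t = i ∧ c t = j) (h2 : ¬ ∃ t, r t = i ∧ c (t+1) = j) :
    cycMat r c i j = 0 := by
  unfold cycMat
  push_neg at h1 h2
  refine Finset.sum_eq_zero fun t _ => ?_
  have e1 : ¬ (r t = i ∧ c t = j) := fun ⟨a, b⟩ => h1 t a b
  have e2 : ¬ (r t = i ∧ c (t+1) = j) := fun ⟨a, b⟩ => h2 t a b
  simp [e1, e2]

end CycMat

section Main

variable {m : ℕ}

def Good (X : Matrix (Fin m) (Fin m) ℝ) (n : ℕ) (Y : Matrix (Fin m) (Fin m) ℝ) : Prop :=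
  (∀ i, ∑ j, Y i j = n) ∧ (∀ j, ∑ i, Y i j = n) ∧
  ∀ i j, ((⌊(n:ℝ) * X i j⌋ : ℝ) ≤ Y i j ∧ Y i j ≤ ((⌈(n:ℝ) * X i j⌉ : ℝ)))

noncomputable def fracSet (Y : Matrix (Fin m) (Fin m) ℝ) : Finset (Fin m × Fin m) := by
  classical exact Finset.univ.filter (fun p => ¬ ∃ z : ℤ, Y p.1 p.2 = (z:ℝ))

lemma mem_fracSet {Y : Matrix (Fin m) (Fin m) ℝ} {p : Fin m × Fin m} :
    p ∈ fracSet Y ↔ ¬ ∃ z : ℤ, Y p.1 p.2 = (z:ℝ) := by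
  classical simp [fracSet]

/-- if all but one value of a function are integral and the total sum is integral,
so is the remaining value. -/
lemma int_of_sum {f : Fin m → ℝ} {j : Fin m} (hsum : ∃ z : ℤ, ∑ x, f x = (z:ℝ))
    (h : ∀ x, x ≠ j → ∃ z : ℤ, f x = (z:ℝ)) : ∃ z : ℤ, f j = (z:ℝ) := by
  classical
  obtain ⟨z, hz⟩ := hsum
  choose w hw using h
  refine ⟨z - ∑ x ∈ (Finset.univ.erase j).attach, w x.1 (Finset.ne_of_mem_erase x.2), ?_⟩
  have h2 : ∑ x ∈ (Finset.univ.erase j).attach, f x.1 = ∑ x ∈ Finset.univ.erase j, f x :=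
    Finset.sum_attach _ _
  have h3 : f j + ∑ x ∈ Finset.univ.erase j, f x = (z:ℝ) := by
    rw [Finset.add_sum_erase _ _ (Finset.mem_univ j)]; exact hz
  have h4 : ∑ x ∈ (Finset.univ.erase j).attach, f x.1
      = ∑ x ∈ (Finset.univ.erase j).attach, ((w x.1 (Finset.ne_of_mem_erase x.2) : ℤ) : ℝ) :=
    Finset.sum_congr rfl fun x _ => hw x.1 (Finset.ne_of_mem_erase x.2)
  push_cast
  rw [← h2, h4] at h3
  push_cast at h3
  linarith

lemma descent (X : Matrix (Fin m) (Fin m) ℝ) (n : ℕ) (Y : Matrix (Fin m) (Fin m) ℝ)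
    (hY : Good X n Y) (hne : (fracSet Y).Nonempty) :
    ∃ Y', Good X n Y' ∧ (fracSet Y').card < (fracSet Y).card := by
  classical
  obtain ⟨hr, hc, hb⟩ := hY
  have hrowext : ∀ p ∈ fracSet Y, ∃ q ∈ fracSet Y, q.1 = p.1 ∧ q.2 ≠ p.2 := by
    rintro ⟨i, j⟩ hp
    rw [mem_fracSet] at hp
    by_contra hcon
    push_neg at hcon
    refine hp (int_of_sum (f := fun j' => Y i j') ⟨n, by exact_mod_cast hr i⟩ ?_)
    intro x hx
    by_contra hxint
    exact hx (hcon (i, x) (mem_fracSet.mpr hxint) rfl)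
  have hcolext : ∀ p ∈ fracSet Y, ∃ q ∈ fracSet Y, q.2 = p.2 ∧ q.1 ≠ p.1 := by
    rintro ⟨i, j⟩ hp
    rw [mem_fracSet] at hp
    by_contra hcon
    push_neg at hcon
    refine hp (int_of_sum (f := fun i' => Y i' j) ⟨n, by exact_mod_cast hc j⟩ ?_)
    intro x hx
    by_contra hxint
    exact hx (hcon (x, j) (mem_fracSet.mpr hxint) rfl)
  obtain ⟨k, hk2, r, c, hrinj, hcinj, hcyc⟩ := exists_cycle (fracSet Y) hne hrowext hcolext
  haveI : NeZero k := ⟨by omega⟩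
  haveI : Fact (1 < k) := ⟨hk2⟩
  -- strict bounds on fractional cells
  have hFlt : ∀ p ∈ fracSet Y,
      (⌊(n:ℝ) * X p.1 p.2⌋ : ℝ) < Y p.1 p.2 ∧ Y p.1 p.2 < (⌈(n:ℝ) * X p.1 p.2⌉ : ℝ) := by
    rintro ⟨i, j⟩ hp
    rw [mem_fracSet] at hp
    exact ⟨lt_of_le_of_ne (hb i j).1 fun h => hp ⟨_, h.symm⟩,
      lt_of_le_of_ne (hb i j).2 fun h => hp ⟨_, h⟩⟩
  set A : ZMod k → ℝ := fun t => (⌈(n:ℝ) * X (r t) (c t)⌉ : ℝ) - Y (r t) (c t) with hA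
  set B : ZMod k → ℝ := fun t =>
    Y (r t) (c (t+1)) - (⌊(n:ℝ) * X (r t) (c (t+1))⌋ : ℝ) with hB
  set E := Finset.univ.image (fun t => min (A t) (B t)) with hE
  have hEne : E.Nonempty :=
    ⟨_, Finset.mem_image_of_mem _ (Finset.mem_univ (0 : ZMod k))⟩
  set ε := E.min' hEne with hεdef
  have hApos : ∀ t, 0 < A t := fun t => sub_pos.mpr (hFlt _ (hcyc t).1).2
  have hBpos : ∀ t, 0 < B t := fun t => sub_pos.mpr (hFlt _ (hcyc t).2).1
  have hεpos : 0 < ε := by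
    rw [hεdef]
    rw [Finset.lt_min'_iff]
    intro x hx
    obtain ⟨t, _, rfl⟩ := Finset.mem_image.mp hx
    exact lt_min (hApos t) (hBpos t)
  have hεA : ∀ t, ε ≤ A t := fun t =>
    le_trans (Finset.min'_le E _ (Finset.mem_image_of_mem _ (Finset.mem_univ t)))
      (min_le_left _ _)
  have hεB : ∀ t, ε ≤ B t := fun t =>
    le_trans (Finset.min'_le E _ (Finset.mem_image_of_mem _ (Finset.mem_univ t)))
      (min_le_right _ _)
  set Y' : Matrix (Fin m) (Fin m) ℝ := fun i j => Y i j + ε * cycMat r c i j with hY'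
  have hval : ∀ i j,
      (∃ t, r t = i ∧ c t = j) ∨ (∃ t, r t = i ∧ c (t+1) = j) ∨ Y' i j = Y i j := by
    intro i j
    by_cases h1 : ∃ t, r t = i ∧ c t = j
    · exact Or.inl h1
    by_cases h2 : ∃ t, r t = i ∧ c (t+1) = j
    · exact Or.inr (Or.inl h2)
    refine Or.inr (Or.inr ?_)
    simp only [hY']
    rw [cycMat_zero h1 h2, mul_zero, add_zero]
  have hgood : Good X n Y' := by
    refine ⟨fun i => ?_, fun j => ?_, fun i j => ?_⟩
    · simp only [hY']
      rw [Finset.sum_add_distrib, hr i, ← Finset.mul_sum, cycMat_row, mul_zero, add_zero]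
    · simp only [hY']
      rw [Finset.sum_add_distrib, hc j, ← Finset.mul_sum, cycMat_col, mul_zero, add_zero]
    · rcases hval i j with ⟨t, rfl, rfl⟩ | ⟨t, rfl, rfl⟩ | hsame
      · simp only [hY', cycMat_plus hrinj hcinj, mul_one]
        constructor
        · linarith [(hb (r t) (c t)).1, hεpos]
        · have := hεA t
          rw [hA] at this
          simp only at this
          linarith
      · simp only [hY', cycMat_minus hrinj hcinj, mul_neg_one]
        constructor
        · have := hεB t
          rw [hB] at this
          simp only at this
          linarith
        · linarith [(hb (r t) (c (t+1))).2, hεpos]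
      · rw [hsame]; exact hb i j
  refine ⟨Y', hgood, ?_⟩
  apply Finset.card_lt_card
  rw [Finset.ssubset_iff_of_subset]
  · -- find an element of fracSet Y not in fracSet Y'
    obtain ⟨t₀, _, ht₀⟩ := Finset.mem_image.mp (E.min'_mem hEne)
    rcases le_total (A t₀) (B t₀) with hab | hab
    · have hεeq : ε = A t₀ := by rw [hεdef, ← ht₀, min_eq_left hab]
      refine ⟨(r t₀, c t₀), (hcyc t₀).1, ?_⟩
      rw [mem_fracSet]
      push_neg
      refine ⟨⌈(n:ℝ) * X (r t₀) (c t₀)⌉, ?_⟩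
      simp only [hY', cycMat_plus hrinj hcinj, mul_one, hεeq, hA]
      ring
    · have hεeq : ε = B t₀ := by rw [hεdef, ← ht₀, min_eq_right hab]
      refine ⟨(r t₀, c (t₀+1)), (hcyc t₀).2, ?_⟩
      rw [mem_fracSet]
      push_neg
      refine ⟨⌊(n:ℝ) * X (r t₀) (c (t₀+1))⌋, ?_⟩
      simp only [hY', cycMat_minus hrinj hcinj, mul_neg_one, hεeq, hB]
      ring
  · -- fracSet Y' ⊆ fracSet Y
    intro p hp
    by_contra hpF
    have hsame : Y' p.1 p.2 = Y p.1 p.2 := by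
      rcases hval p.1 p.2 with ⟨t, ht1, ht2⟩ | ⟨t, ht1, ht2⟩ | hsame
      · have := (hcyc t).1
        rw [ht1, ht2, Prod.mk.eta] at this
        exact absurd this hpF
      · have := (hcyc t).2
        rw [ht1, ht2, Prod.mk.eta] at this
        exact absurd this hpF
      · exact hsame
    rw [mem_fracSet] at hp
    rw [mem_fracSet] at hpF
    push_neg at hpF
    obtain ⟨z, hz⟩ := hpF
    exact hp ⟨z, by rw [hsame]; exact hz⟩

lemma exists_integral (X : Matrix (Fin m) (Fin m) ℝ) (n : ℕ) :
    ∀ N (Y : Matrix (Fin m) (Fin m) ℝ), Good X n Y → (fracSet Y).card ≤ N →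
    ∃ Y', Good X n Y' ∧ fracSet Y' = ∅ := by
  intro N
  induction N with
  | zero =>
    intro Y hY hc
    exact ⟨Y, hY, Finset.card_eq_zero.mp (Nat.le_zero.mp hc)⟩
  | succ N ih =>
    intro Y hY hc
    rcases Finset.eq_empty_or_nonempty (fracSet Y) with h | h
    · exact ⟨Y, hY, h⟩
    · obtain ⟨Y', hY', hlt⟩ := descent X n Y hY h
      exact ih Y' hY' (by omega)

end Main

theorem rounding_position_matrix {m : ℕ} (X : Matrix (Fin m) (Fin m) ℝ)
    (hX : Bistochastic X) (n : ℕ) (hn : 0 < n) :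
    ∃ P : Matrix (Fin m) (Fin m) ℕ,
      (∀ i, ∑ j, P i j = n) ∧ (∀ j, ∑ i, P i j = n) ∧
      ∀ i j, |(n : ℝ) * X i j - (P i j : ℝ)| < 1 := by
  obtain ⟨hpos, hrow, hcol⟩ := hX
  have hgood : Good X n (fun i j => (n:ℝ) * X i j) := by
    refine ⟨fun i => ?_, fun j => ?_, fun i j => ⟨Int.floor_le _, Int.le_ceil _⟩⟩
    · rw [← Finset.mul_sum, hrow i, mul_one]
    · rw [← Finset.mul_sum, hcol j, mul_one]
  obtain ⟨Y, ⟨hr, hc, hb⟩, hfrac⟩ :=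
    exists_integral X n (fracSet (fun i j => (n:ℝ) * X i j)).card _ hgood le_rfl
  have hint : ∀ i j, ∃ z : ℤ, Y i j = (z:ℝ) := by
    intro i j
    by_contra h
    exact absurd (hfrac ▸ (mem_fracSet.mpr h : (i,j) ∈ fracSet Y)) (by simp)
  have hY0 : ∀ i j, 0 ≤ Y i j := by
    intro i j
    refine le_trans ?_ (hb i j).1
    have h1 : (0:ℝ) ≤ (n:ℝ) * X i j := mul_nonneg (by positivity) (hpos i j)
    exact_mod_cast Int.floor_nonneg.mpr h1
  choose z hz using hint
  have hz0 : ∀ i j, 0 ≤ z i j := fun i j => by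
    have := hY0 i j; rw [hz i j] at this; exact_mod_cast this
  refine ⟨fun i j => (z i j).toNat, ?_, ?_, ?_⟩
  · intro i
    have : ((∑ j, (z i j).toNat : ℕ) : ℝ) = (n:ℝ) := by
      push_cast
      rw [← hr i]
      refine Finset.sum_congr rfl fun j _ => ?_
      rw [hz i j]; exact_mod_cast Int.toNat_of_nonneg (hz0 i j)
    exact_mod_cast this
  · intro j
    have : ((∑ i, (z i j).toNat : ℕ) : ℝ) = (n:ℝ) := by
      push_cast
      rw [← hc j]
      refine Finset.sum_congr rfl fun i _ => ?_
      rw [hz i j]; exact_mod_cast Int.toNat_of_nonneg (hz0 i j)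
    exact_mod_cast this
  · intro i j
    have hPY : (((z i j).toNat : ℕ) : ℝ) = Y i j := by
      rw [hz i j]; exact_mod_cast Int.toNat_of_nonneg (hz0 i j)
    rw [hPY, abs_sub_lt_iff]
    have h1 := (hb i j).1
    have h2 := (hb i j).2
    have h3 := Int.sub_one_lt_floor ((n:ℝ) * X i j)
    have h4 := Int.ceil_lt_add_one ((n:ℝ) * X i j)
    constructor <;> linarith
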